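/- Let p > 3 be a prime and λ ∈ F_p with λ ∉ {0, 1, −1}. Then #{(u, v) ∈ F_p × F_p : v² = u⁴ + 2λu² + 1} + 1 = #{(x, y) ∈ F_p × F_p : y² = x³ − 4λx² + (4λ² − 4)x}. -/

import Mathlib

theorem jacobi_count_eq_Epp_count (p : ℕ) [Fact p.Prime] (hp : 3 < p)
    (l : ZMod p) (hl0 : l ≠ 0) (hl1 : l ≠ 1) (hlm1 : l ≠ -1) :
    (Finset.univ.filter (fun uv : ZMod p × ZMod p =>
        uv.2 ^ 2 = uv.1 ^ 4 + 2 * l * uv.1 ^ 2 + 1)).card + 1 =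
      (Finset.univ.filter (fun xy : ZMod p × ZMod p =>
        xy.2 ^ 2 = xy.1 ^ 3 - 4 * l * xy.1 ^ 2 + (4 * l ^ 2 - 4) * xy.1)).card := by
  classical
  have h2 : (2 : ZMod p) ≠ 0 := by
    intro h
    rw [show ((2 : ZMod p)) = ((2 : ℕ) : ZMod p) by norm_num,
      ZMod.natCast_eq_zero_iff] at h
    have := Nat.le_of_dvd (by norm_num) h
    omega
  have h4 : (4 : ZMod p) ≠ 0 := by
    rw [show (4 : ZMod p) = 2 * 2 by norm_num]
    exact mul_ne_zero h2 h2
  have hlsq : l ^ 2 - 1 ≠ 0 := by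
    intro h
    have h' : (l - 1) * (l + 1) = 0 := by linear_combination h
    rcases mul_eq_zero.1 h' with h'' | h''
    · exact hl1 (by linear_combination h'')
    · exact hlm1 (by linear_combination h'')
  set S := Finset.univ.filter (fun xy : ZMod p × ZMod p =>
      xy.2 ^ 2 = xy.1 ^ 3 - 4 * l * xy.1 ^ 2 + (4 * l ^ 2 - 4) * xy.1) with hS
  have hsplit : (S.filter (fun xy => xy.1 = 0)).card
      + (S.filter (fun xy => ¬ xy.1 = 0)).card = S.card :=
    Finset.card_filter_add_card_filter_not _
  have hzero : S.filter (fun xy => xy.1 = 0) = {((0 : ZMod p), (0 : ZMod p))} := by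
    ext ⟨x, y⟩
    simp only [hS, Finset.mem_filter, Finset.mem_univ, true_and, Finset.mem_singleton,
      Prod.mk.injEq]
    constructor
    · rintro ⟨hQ, rfl⟩
      refine ⟨rfl, ?_⟩
      have : y ^ 2 = 0 := by simpa using hQ
      exact pow_eq_zero_iff (by norm_num) |>.1 this
    · rintro ⟨rfl, rfl⟩
      simp
  have hbij : (Finset.univ.filter (fun uv : ZMod p × ZMod p =>
      uv.2 ^ 2 = uv.1 ^ 4 + 2 * l * uv.1 ^ 2 + 1)).card
      = (S.filter (fun xy => ¬ xy.1 = 0)).card := by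
    apply Finset.card_nbij'
      (i := fun uv => (2 * (uv.1 ^ 2 + uv.2 + l), 2 * uv.1 * (2 * (uv.1 ^ 2 + uv.2 + l))))
      (j := fun xy => (xy.2 / (2 * xy.1), xy.1 / 2 - l - (xy.2 / (2 * xy.1)) ^ 2))
    · -- hi
      rintro ⟨u, v⟩ hu
      simp only [Finset.coe_filter, Set.mem_setOf_eq, Finset.mem_coe, Finset.mem_filter, Finset.mem_univ, true_and] at hu
      have hx : u ^ 2 + v + l ≠ 0 := by
        intro h
        have hv : v = -(u ^ 2 + l) := by linear_combination h
        exact hlsq (by linear_combination hu - (v - (u ^ 2 + l)) * hv)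
      simp only [hS, Finset.coe_filter, Set.mem_setOf_eq, Finset.mem_coe, Finset.mem_filter, Finset.mem_univ, true_and]
      refine ⟨by linear_combination (-8 * (u ^ 2 + v + l)) * hu, fun h => ?_⟩
      rcases mul_eq_zero.1 h with h' | h'
      · exact h2 h'
      · exact hx h'
    · -- hj
      rintro ⟨x, y⟩ hxy
      simp only [hS, Finset.coe_filter, Set.mem_setOf_eq, Finset.mem_coe, Finset.mem_filter, Finset.mem_univ, true_and] at hxy
      obtain ⟨hQ, hx⟩ := hxy
      have hx' : x ≠ 0 := hx
      have h2x : (2 : ZMod p) * x ≠ 0 := mul_ne_zero h2 hx'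
      simp only [Finset.coe_filter, Set.mem_setOf_eq, Finset.mem_coe, Finset.mem_filter, Finset.mem_univ, true_and]
      obtain ⟨u, hu_def⟩ : ∃ u : ZMod p, u = y / (2 * x) := ⟨_, rfl⟩
      have hu : 2 * x * u = y := by rw [hu_def]; field_simp
      show (x / 2 - l - (y / (2 * x)) ^ 2) ^ 2
          = (y / (2 * x)) ^ 4 + 2 * l * (y / (2 * x)) ^ 2 + 1
      rw [← hu_def]
      have hu3 : 4 * x * u ^ 2 = x ^ 2 - 4 * l * x + (4 * l ^ 2 - 4) := by
        apply mul_left_cancel₀ hx'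
        linear_combination (2 * x * u + y) * hu + hQ
      have key : (x - 2 * l - 2 * u ^ 2) ^ 2 = 4 * (u ^ 4 + 2 * l * u ^ 2 + 1) := by
        linear_combination -hu3
      have hstep : x / 2 - l - u ^ 2 = (x - 2 * l - 2 * u ^ 2) / 2 := by
        have hx2 : x / 2 * 2 = x := div_mul_cancel₀ x h2
        rw [eq_div_iff h2]
        linear_combination hx2
      rw [hstep, div_pow, key, show ((2 : ZMod p) ^ 2 = 4) by norm_num]
      exact mul_div_cancel_left₀ _ h4
    · -- left_inv
      rintro ⟨u, v⟩ hu
      simp only [Finset.coe_filter, Set.mem_setOf_eq, Finset.mem_coe, Finset.mem_filter, Finset.mem_univ, true_and] at hu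
      have hx : u ^ 2 + v + l ≠ 0 := by
        intro h
        have hv : v = -(u ^ 2 + l) := by linear_combination h
        exact hlsq (by linear_combination hu - (v - (u ^ 2 + l)) * hv)
      have hX : (2 : ZMod p) * (u ^ 2 + v + l) ≠ 0 := mul_ne_zero h2 hx
      refine Prod.ext ?_ ?_
      · show 2 * u * (2 * (u ^ 2 + v + l)) / (2 * (2 * (u ^ 2 + v + l))) = u
        field_simp
      · show 2 * (u ^ 2 + v + l) / 2 - l
            - (2 * u * (2 * (u ^ 2 + v + l)) / (2 * (2 * (u ^ 2 + v + l)))) ^ 2 = v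
        field_simp
        ring
    · -- right_inv
      rintro ⟨x, y⟩ hxy
      simp only [hS, Finset.coe_filter, Set.mem_setOf_eq, Finset.mem_coe, Finset.mem_filter, Finset.mem_univ, true_and] at hxy
      obtain ⟨hQ, hx⟩ := hxy
      have hx' : x ≠ 0 := hx
      have h2x : (2 : ZMod p) * x ≠ 0 := mul_ne_zero h2 hx'
      obtain ⟨u, hu_def⟩ : ∃ u : ZMod p, u = y / (2 * x) := ⟨_, rfl⟩
      have hu : 2 * x * u = y := by rw [hu_def]; field_simp
      have hinner : 2 * (u ^ 2 + (x / 2 - l - u ^ 2) + l) = x := by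
        have hx2 : x / 2 * 2 = x := div_mul_cancel₀ x h2
        linear_combination hx2
      refine Prod.ext ?_ ?_
      · show 2 * ((y / (2 * x)) ^ 2 + (x / 2 - l - (y / (2 * x)) ^ 2) + l) = x
        rw [← hu_def]
        exact hinner
      · show 2 * (y / (2 * x))
            * (2 * ((y / (2 * x)) ^ 2 + (x / 2 - l - (y / (2 * x)) ^ 2) + l)) = y
        rw [← hu_def, hinner]
        linear_combination hu
  rw [hbij, ← hsplit, hzero]
  simp [add_comm]
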